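/- Let G and G' be groups and let φ : G → G' be a bijection such that for all x, y ∈ G, either φ(xy) = φ(x)φ(y) or φ(xy) = φ(y)φ(x). Then φ is either an isomorphism or an anti-isomorphism (i.e., either φ(xy) = φ(x)φ(y) for all x, y, or φ(xy) = φ(y)φ(x) for all x, y). -/
import Mathlib

section HalfIso

variable {G G' : Type*} [Group G] [Group G']

private lemma aux_comm1 (φ : G → G')
    (hhalf : ∀ x y : G, φ (x * y) = φ x * φ y ∨ φ (x * y) = φ y * φ x)
    {a b : G} (hc : a * b = b * a) (h1 : φ (a * b) = φ a * φ b) :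
    φ a * φ b = φ b * φ a := by
  by_contra hne
  have hsq : φ (a * a) = φ a * φ a := by rcases hhalf a a with h | h <;> exact h
  have hA2B : φ (a * a * b) = φ a * (φ a * φ b) := by
    have e1 := hhalf a (a * b)
    rw [← mul_assoc a a b, h1] at e1
    rcases e1 with e1 | e1
    · exact e1
    · exfalso
      rcases hhalf (a * a) b with e2 | e2 <;> rw [hsq] at e2
      · have h3 : (φ a * φ b) * φ a = (φ a * φ a) * φ b := e1.symm.trans e2
        rw [mul_assoc, mul_assoc] at h3
        exact hne (mul_left_cancel h3).symm
      · have h3 : (φ a * φ b) * φ a = φ b * (φ a * φ a) := e1.symm.trans e2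
        rw [← mul_assoc (φ b) (φ a) (φ a)] at h3
        exact hne (mul_right_cancel h3)
  have habab : φ (a * a * b * b) = (φ a * φ b) * (φ a * φ b) := by
    have key : a * b * (a * b) = a * a * b * b := by
      rw [show a * b * (a * b) = a * (b * a) * b by group, ← hc]; group
    have e := hhalf (a * b) (a * b)
    rw [h1, key] at e
    rcases e with e | e <;> exact e
  have e3 := hhalf (a * a * b) b
  rw [hA2B] at e3
  rcases e3 with e3 | e3
  · have h3 : (φ a * φ b) * (φ a * φ b) = (φ a * (φ a * φ b)) * φ b :=
      habab.symm.trans e3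
    rw [mul_assoc (φ a) (φ b) (φ a * φ b), mul_assoc (φ a) (φ a * φ b) (φ b)] at h3
    have h4 := mul_left_cancel h3
    rw [← mul_assoc (φ b) (φ a) (φ b)] at h4
    exact hne (mul_right_cancel h4).symm
  · have h3 : (φ a * φ b) * (φ a * φ b) = φ b * (φ a * (φ a * φ b)) :=
      habab.symm.trans e3
    rw [← mul_assoc (φ a * φ b) (φ a) (φ b), ← mul_assoc (φ b) (φ a) (φ a * φ b),
        ← mul_assoc (φ b * φ a) (φ a) (φ b)] at h3
    have h4 := mul_right_cancel h3
    exact hne (mul_right_cancel h4)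

private lemma aux_comm (φ : G → G')
    (hhalf : ∀ x y : G, φ (x * y) = φ x * φ y ∨ φ (x * y) = φ y * φ x)
    {a b : G} (hc : a * b = b * a) :
    φ a * φ b = φ b * φ a := by
  rcases hhalf a b with h | h
  · exact aux_comm1 φ hhalf hc h
  · have h' : φ (b * a) = φ b * φ a := by rw [← hc]; exact h
    exact (aux_comm1 φ hhalf hc.symm h').symm

private lemma lemC_xyz (φ : G → G')
    (hhalf : ∀ x y : G, φ (x * y) = φ x * φ y ∨ φ (x * y) = φ y * φ x)
    {x y z : G}
    (hxy : φ (x * y) = φ x * φ y)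
    (hne_uv : φ x * φ y ≠ φ y * φ x)
    (hC : φ z * φ y = φ y * φ z) :
    φ (x * y * z) = φ x * (φ y * φ z) := by
  have hyz : φ (y * z) = φ y * φ z := by
    rcases hhalf y z with h | h
    · exact h
    · rw [h, hC]
  rcases hhalf (x * y) z with e1 | e1
  · rw [e1, hxy, mul_assoc]
  · rw [hxy] at e1
    rcases hhalf x (y * z) with e2 | e2 <;> rw [← mul_assoc x y z, hyz] at e2
    · exact e2
    · exfalso
      have h3 : φ z * (φ x * φ y) = (φ y * φ z) * φ x := e1.symm.trans e2
      rw [← hC, mul_assoc] at h3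
      exact hne_uv (mul_left_cancel h3)

private lemma lemC_D1 (φ : G → G') (hinj : Function.Injective φ)
    (hhalf : ∀ x y : G, φ (x * y) = φ x * φ y ∨ φ (x * y) = φ y * φ x)
    {x y z : G}
    (hxy : φ (x * y) = φ x * φ y)
    (hne_uv : φ x * φ y ≠ φ y * φ x)
    (hne_uw : φ x * φ z ≠ φ z * φ x)
    (hzx : φ (z * x) = φ x * φ z)
    (hC : φ z * φ y = φ y * φ z) :
    φ x * (φ y * φ z) = (φ y * φ z) * φ x := by
  have hyz : φ (y * z) = φ y * φ z := by
    rcases hhalf y z with h | h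
    · exact h
    · rw [h, hC]
  have hxyz := lemC_xyz φ hhalf hxy hne_uv hC
  rcases hhalf (y * z) x with e1 | e1 <;> rw [hyz] at e1
  · rcases hhalf y (z * x) with e2 | e2 <;> rw [← mul_assoc y z x, hzx] at e2
    · exfalso
      have h3 : (φ y * φ z) * φ x = φ y * (φ x * φ z) := e1.symm.trans e2
      rw [mul_assoc (φ y) (φ z) (φ x)] at h3
      exact hne_uw (mul_left_cancel h3).symm
    · have h3 : (φ y * φ z) * φ x = (φ x * φ z) * φ y := e1.symm.trans e2
      rw [mul_assoc (φ x) (φ z) (φ y), hC] at h3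
      exact h3.symm
  · have heq : y * z * x = x * y * z := hinj (e1.trans hxyz.symm)
    have hc' : x * (y * z) = (y * z) * x := by rw [← mul_assoc, ← heq]
    have h := aux_comm φ hhalf hc'
    rw [hyz] at h
    exact h

private lemma lemC_final (φ : G → G') (hinj : Function.Injective φ)
    (hhalf : ∀ x y : G, φ (x * y) = φ x * φ y ∨ φ (x * y) = φ y * φ x)
    {x y z : G}
    (hxy : φ (x * y) = φ x * φ y)
    (hne_uv : φ x * φ y ≠ φ y * φ x)
    (hne_uw : φ x * φ z ≠ φ z * φ x)
    (hzx : φ (z * x) = φ x * φ z)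
    (hC : φ z * φ y = φ y * φ z)
    (hval : φ (y * x * z) = φ z * (φ y * φ x)) : False := by
  have hxyz := lemC_xyz φ hhalf hxy hne_uv hC
  have hD1 := lemC_D1 φ hinj hhalf hxy hne_uv hne_uw hzx hC
  have hval' : φ (y * x * z) = φ x * (φ y * φ z) := by
    rw [hval, ← mul_assoc (φ z) (φ y) (φ x), hC, hD1]
  have heq : y * x * z = x * y * z := hinj (hval'.trans hxyz.symm)
  have hc' : y * x = x * y := mul_right_cancel heq
  exact hne_uv (aux_comm φ hhalf hc'.symm)

private lemma lemA_final (φ : G → G') (hinj : Function.Injective φ)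
    (hhalf : ∀ x y : G, φ (x * y) = φ x * φ y ∨ φ (x * y) = φ y * φ x)
    {x y z : G}
    (hxy : φ (x * y) = φ x * φ y)
    (hyx : φ (y * x) = φ y * φ x)
    (hxz : φ (x * z) = φ z * φ x)
    (hzx : φ (z * x) = φ x * φ z)
    (hne_uv : φ x * φ y ≠ φ y * φ x)
    (hne_uw : φ x * φ z ≠ φ z * φ x)
    (hA : φ y * (φ x * φ z) = φ z * (φ x * φ y)) : False := by
  have hyxz : φ (y * x * z) = φ y * (φ x * φ z) := by
    rcases hhalf (y * x) z with e1 | e1 <;> rw [hyx] at e1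
    · rw [e1, mul_assoc]
    · exfalso
      rcases hhalf y (x * z) with e2 | e2 <;> rw [← mul_assoc y x z, hxz] at e2
      · have h3 : φ z * (φ y * φ x) = φ y * (φ z * φ x) := e1.symm.trans e2
        rw [← mul_assoc (φ z) (φ y) (φ x), ← mul_assoc (φ y) (φ z) (φ x)] at h3
        have hC : φ z * φ y = φ y * φ z := mul_right_cancel h3
        exact lemC_final φ hinj hhalf hxy hne_uv hne_uw hzx hC e1
      · have h3 : φ z * (φ y * φ x) = (φ z * φ x) * φ y := e1.symm.trans e2
        rw [mul_assoc (φ z) (φ x) (φ y)] at h3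
        exact hne_uv (mul_left_cancel h3).symm
  have eA : x * (y * x * z) = (x * y) * (x * z) := by group
  have e2 := hhalf (x * y) (x * z)
  rw [hxy, hxz, ← eA] at e2
  have e1 := hhalf x (y * x * z)
  rw [hyxz] at e1
  rcases e1 with e1 | e1 <;> rcases e2 with e2 | e2
  · have h : φ x * (φ y * (φ x * φ z)) = (φ x * φ y) * (φ z * φ x) := e1.symm.trans e2
    rw [mul_assoc (φ x) (φ y) (φ z * φ x)] at h
    exact hne_uw (mul_left_cancel (mul_left_cancel h))
  · have h : φ x * (φ y * (φ x * φ z)) = (φ z * φ x) * (φ x * φ y) := e1.symm.trans e2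
    rw [hA, ← mul_assoc (φ x) (φ z) (φ x * φ y)] at h
    exact hne_uw (mul_right_cancel h)
  · have h : (φ y * (φ x * φ z)) * φ x = (φ x * φ y) * (φ z * φ x) := e1.symm.trans e2
    rw [← mul_assoc (φ x * φ y) (φ z) (φ x)] at h
    have h2 := mul_right_cancel h
    rw [← mul_assoc (φ y) (φ x) (φ z)] at h2
    exact hne_uv (mul_right_cancel h2).symm
  · have h : (φ y * (φ x * φ z)) * φ x = (φ z * φ x) * (φ x * φ y) := e1.symm.trans e2
    rw [hA, mul_assoc (φ z) (φ x * φ y) (φ x), mul_assoc (φ z) (φ x) (φ x * φ y)] at h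
    have h2 := mul_left_cancel h
    rw [mul_assoc (φ x) (φ y) (φ x)] at h2
    exact hne_uv (mul_left_cancel h2).symm

private lemma claim1 (φ : G → G') (hinj : Function.Injective φ)
    (hhalf : ∀ x y : G, φ (x * y) = φ x * φ y ∨ φ (x * y) = φ y * φ x)
    (x : G) :
    (∀ y, φ (x * y) = φ x * φ y) ∨ (∀ y, φ (x * y) = φ y * φ x) := by
  by_contra hcon
  push_neg at hcon
  obtain ⟨⟨z, hz⟩, ⟨y, hy⟩⟩ := hcon
  have hxy : φ (x * y) = φ x * φ y := (hhalf x y).resolve_right hy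
  have hxz : φ (x * z) = φ z * φ x := (hhalf x z).resolve_left hz
  have hne_uv : φ x * φ y ≠ φ y * φ x := fun h => hy (by rw [hxy, h])
  have hne_uw : φ x * φ z ≠ φ z * φ x := fun h => hz (by rw [hxz, ← h])
  have hyx : φ (y * x) = φ y * φ x := by
    rcases hhalf y x with h | h
    · exact h
    · exfalso
      have heq : y * x = x * y := hinj (h.trans hxy.symm)
      exact hne_uv (aux_comm φ hhalf heq.symm)
  have hzx : φ (z * x) = φ x * φ z := by
    rcases hhalf z x with h | h
    · exfalso
      have heq : z * x = x * z := hinj (h.trans hxz.symm)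
      exact hne_uw (aux_comm φ hhalf heq.symm)
    · exact h
  rcases hhalf (z * x) y with e1 | e1 <;> rw [hzx] at e1
  · rcases hhalf z (x * y) with e2 | e2 <;> rw [← mul_assoc z x y, hxy] at e2
    · have h3 : (φ x * φ z) * φ y = φ z * (φ x * φ y) := e1.symm.trans e2
      rw [← mul_assoc (φ z) (φ x) (φ y)] at h3
      exact hne_uw (mul_right_cancel h3)
    · have h3 : (φ x * φ z) * φ y = (φ x * φ y) * φ z := e1.symm.trans e2
      rw [mul_assoc (φ x) (φ z) (φ y), mul_assoc (φ x) (φ y) (φ z)] at h3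
      have hC : φ z * φ y = φ y * φ z := mul_left_cancel h3
      rcases hhalf (y * x) z with f1 | f1 <;> rw [hyx] at f1
      · rcases hhalf y (x * z) with f2 | f2 <;> rw [← mul_assoc y x z, hxz] at f2
        · have h4 : (φ y * φ x) * φ z = φ y * (φ z * φ x) := f1.symm.trans f2
          rw [mul_assoc (φ y) (φ x) (φ z)] at h4
          exact hne_uw (mul_left_cancel h4)
        · have h4 : (φ y * φ x) * φ z = (φ z * φ x) * φ y := f1.symm.trans f2
          rw [mul_assoc (φ y) (φ x) (φ z), mul_assoc (φ z) (φ x) (φ y)] at h4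
          exact lemA_final φ hinj hhalf hxy hyx hxz hzx hne_uv hne_uw h4
      · exact lemC_final φ hinj hhalf hxy hne_uv hne_uw hzx hC f1
  · rcases hhalf z (x * y) with e2 | e2 <;> rw [← mul_assoc z x y, hxy] at e2
    · have hA : φ y * (φ x * φ z) = φ z * (φ x * φ y) := e1.symm.trans e2
      exact lemA_final φ hinj hhalf hxy hyx hxz hzx hne_uv hne_uw hA
    · have h3 : φ y * (φ x * φ z) = (φ x * φ y) * φ z := e1.symm.trans e2
      rw [← mul_assoc (φ y) (φ x) (φ z)] at h3
      exact hne_uv (mul_right_cancel h3).symm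

end HalfIso

theorem stmt_0 {G G' : Type*} [Group G] [Group G'] (φ : G → G')
    (hbij : Function.Bijective φ)
    (hhalf : ∀ x y : G, φ (x * y) = φ x * φ y ∨ φ (x * y) = φ y * φ x) :
    (∀ x y : G, φ (x * y) = φ x * φ y) ∨ (∀ x y : G, φ (x * y) = φ y * φ x) := by
  have hinj := hbij.1
  by_cases hP : ∀ x y : G, φ (x * y) = φ x * φ y
  · exact Or.inl hP
  by_cases hQ : ∀ x y : G, φ (x * y) = φ y * φ x
  · exact Or.inr hQ
  exfalso
  push_neg at hP hQ
  obtain ⟨z, c, hzc⟩ := hP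
  obtain ⟨x, d, hxd⟩ := hQ
  have hQz : ∀ y, φ (z * y) = φ y * φ z :=
    (claim1 φ hinj hhalf z).resolve_left fun h => hzc (h c)
  have hPx : ∀ y, φ (x * y) = φ x * φ y :=
    (claim1 φ hinj hhalf x).resolve_right fun h => hxd (h d)
  have hzc' : φ c * φ z ≠ φ z * φ c := fun h => hzc (by rw [hQz c, h])
  have hxd' : φ x * φ d ≠ φ d * φ x := fun h => hxd (by rw [hPx d, h])
  rcases claim1 φ hinj hhalf (x * z) with hPxz | hQxz
  · have E1 : φ (x * z * c) = φ x * (φ z * φ c) := by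
      rw [hPxz c, hPx z, mul_assoc]
    have E2 : φ (x * z * c) = φ x * (φ c * φ z) := by
      rw [mul_assoc x z c, hPx (z * c), hQz c]
    exact hzc' (mul_left_cancel (E1.symm.trans E2)).symm
  · have E1 : φ (x * z * d) = φ d * (φ x * φ z) := by
      rw [hQxz d, hPx z]
    have E2 : φ (x * z * d) = φ x * (φ d * φ z) := by
      rw [mul_assoc x z d, hPx (z * d), hQz d]
    have h' : (φ d * φ x) * φ z = (φ x * φ d) * φ z := by
      rw [mul_assoc, mul_assoc]; exact E1.symm.trans E2
    exact hxd' (mul_right_cancel h').symm
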